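/- For all n ≥ 2, the number of nonnesting permutations of the multiset {1,1,2,2,…,n,n} that avoid all three patterns 123, 213, and 231 equals 4(n − 1). -/

import Mathlib

/-- `w` is a permutation of the multiset `{1,1,2,2,…,n,n}`:
a word in which every value in `{1,…,n}` occurs exactly twice
and no other value occurs. -/
def IsMultisetPerm (n : ℕ) (w : List ℕ) : Prop :=
  ∀ i : ℕ, w.count i = if 1 ≤ i ∧ i ≤ n then 2 else 0

/-- `t` is order-isomorphic to the word `σ`:
same length, and entries compare (both `<` and `=`) in the same way. -/
def OrderIsoWord (t σ : List ℕ) : Prop :=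
  t.length = σ.length ∧
  ∀ r s : ℕ, r < σ.length → s < σ.length →
    ((t.getD r 0 < t.getD s 0 ↔ σ.getD r 0 < σ.getD s 0) ∧
     (t.getD r 0 = t.getD s 0 ↔ σ.getD r 0 = σ.getD s 0))

/-- `w` contains the pattern `σ`: some subsequence of `w`
is order-isomorphic to `σ`. -/
def Contains (w σ : List ℕ) : Prop :=
  ∃ t : List ℕ, t.Sublist w ∧ OrderIsoWord t σ

/-- `w` avoids the pattern `σ`. -/
def Avoids (w σ : List ℕ) : Prop := ¬ Contains w σ

/-- `w` is a nonnesting permutation of `{1,1,2,2,…,n,n}`: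
it avoids the patterns `1221` and `2112`. -/
def IsNonnesting (n : ℕ) (w : List ℕ) : Prop :=
  IsMultisetPerm n w ∧ Avoids w [1,2,2,1] ∧ Avoids w [2,1,1,2]

def dd : ℕ → List ℕ
  | 0 => []
  | 1 => []
  | (n+2) => (n+2) :: (n+2) :: dd (n+1)

lemma dd_length (n : ℕ) : (dd n).length = 2*n - 2 := by
  induction n with
  | zero => rfl
  | succ m ih =>
    match m with
    | 0 => rfl
    | k+1 => simp [dd, List.length] at ih ⊢; omega

lemma dd_mem {n a : ℕ} (h : a ∈ dd n) : 2 ≤ a ∧ a ≤ n := by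
  induction n with
  | zero => simp [dd] at h
  | succ m ih =>
    match m, h with
    | 0, h => simp [dd] at h
    | k+1, h =>
      rcases List.mem_cons.mp (show a ∈ (k+2) :: ((k+2) :: dd (k+1)) from h)
        with h' | h'
      · omega
      · rcases List.mem_cons.mp h' with h'' | h''
        · omega
        · rcases ih h'' with ⟨h1, h2⟩; omega

lemma dd_count (n i : ℕ) : (dd n).count i = if 2 ≤ i ∧ i ≤ n then 2 else 0 := by
  induction n with
  | zero => simp [dd]; omega
  | succ m ih =>
    match m with
    | 0 => simp [dd]; omega
    | k+1 =>
      show ((k+2) :: (k+2) :: dd (k+1)).count i = _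
      rw [List.count_cons, List.count_cons, ih]
      by_cases h : i = k + 2 <;> simp [h] <;> split_ifs <;> omega

lemma dd_sorted (n : ℕ) : (dd n).Pairwise (· ≥ ·) := by
  induction n with
  | zero => simp [dd]
  | succ m ih =>
    match m with
    | 0 => simp [dd]
    | k+1 =>
      show ((k+2) :: (k+2) :: dd (k+1)).Pairwise _
      refine List.Pairwise.cons ?_ (List.Pairwise.cons ?_ ih) <;>
        intro a ha
      · rcases List.mem_cons.mp ha with h | h
        · omega
        · exact le_trans (dd_mem h).2 (by omega)
      · exact le_trans (dd_mem ha).2 (by omega)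



lemma dd_dup_adj {n : ℕ} : ∀ {u v t : List ℕ} {a : ℕ},
    dd n = u ++ a :: v ++ a :: t → v = [] ∧ Even u.length := by
  induction n with
  | zero => intro u v t a h; simp [dd] at h
  | succ m ih =>
    match m with
    | 0 => intro u v t a h; simp [dd] at h
    | k+1 =>
      intro u v t a h
      rw [show dd (k+2) = (k+2) :: (k+2) :: dd (k+1) from rfl] at h
      match u with
      | [] =>
        match v with
        | [] => exact ⟨rfl, by simp⟩
        | c :: v' =>
          simp only [List.nil_append, List.cons_append, List.cons.injEq] at h
          obtain ⟨rfl, rfl, h⟩ := h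
          exact absurd (dd_mem (h ▸ (show (k+2) ∈ v' ++ (k+2) :: t by simp))).2 (by omega)
      | [c] =>
        simp only [List.cons_append, List.nil_append, List.cons.injEq] at h
        obtain ⟨rfl, rfl, h⟩ := h
        exact absurd (dd_mem (h ▸ (show (k+2) ∈ v ++ (k+2) :: t by simp))).2 (by omega)
      | c :: c' :: u' =>
        simp only [List.cons_append, List.cons.injEq] at h
        obtain ⟨rfl, rfl, h⟩ := h
        obtain ⟨h1, h2⟩ := ih (by simpa using h)
        exact ⟨h1, by simpa [Nat.even_add_one, Nat.even_iff] using h2⟩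

lemma dd_even_adj {n : ℕ} : ∀ {u v : List ℕ} {a b : ℕ},
    dd n = u ++ a :: b :: v → Even u.length → a = b := by
  induction n with
  | zero => intro u v a b h _; simp [dd] at h
  | succ m ih =>
    match m with
    | 0 => intro u v a b h _; simp [dd] at h
    | k+1 =>
      intro u v a b h he
      rw [show dd (k+2) = (k+2) :: (k+2) :: dd (k+1) from rfl] at h
      match u with
      | [] =>
        simp only [List.nil_append, List.cons.injEq] at h
        omega
      | [c] => simp [Nat.even_iff] at he
      | c :: c' :: u' =>
        simp only [List.cons_append, List.cons.injEq] at h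
        obtain ⟨rfl, rfl, h⟩ := h
        exact ih h (by simpa [Nat.even_add_one, Nat.even_iff] using he)
lemma split_first {α : Type*} {a : α} {l : List α} (h : a ∈ l) :
    ∃ s t, l = s ++ a :: t ∧ a ∉ s := by
  induction l with
  | nil => simp at h
  | cons b l ih =>
    by_cases hb : a = b
    · exact ⟨[], l, by simp [hb], by simp⟩
    · rcases ih (by rcases List.mem_cons.mp h with h|h; exact absurd h hb; exact h) with
        ⟨s, t, rfl, hns⟩
      exact ⟨b :: s, t, by simp, by simp [hns, Ne.symm, hb]⟩

lemma uniq_split {α : Type*} {e : α} : ∀ {x x' r r' : List α},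
    (∀ a ∈ x, a ≠ e) → (∀ a ∈ x', a ≠ e) → x ++ e :: r = x' ++ e :: r' →
    x = x' ∧ r = r' := by
  intro x
  induction x with
  | nil =>
    intro x' r r' _ hx' h
    match x' with
    | [] => simpa using h
    | b :: x'' =>
      simp at h
      exact absurd h.1.symm (hx' b (by simp))
  | cons b x ih =>
    intro x' r r' hx hx' h
    match x' with
    | [] =>
      simp at h
      exact absurd h.1 (hx b (by simp))
    | c :: x'' =>
      simp only [List.cons_append, List.cons.injEq] at h
      obtain ⟨rfl, h⟩ := h
      obtain ⟨h1, h2⟩ := ih (fun a ha => hx a (by simp [ha])) (fun a ha => hx' a (by simp [ha])) h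
      exact ⟨by rw [h1], h2⟩

lemma count_two_split {l : List ℕ} {a : ℕ} (h : l.count a = 2) :
    ∃ x y z, l = x ++ a :: y ++ a :: z ∧ a ∉ x ∧ a ∉ y ∧ a ∉ z := by
  have h1 : a ∈ l := List.count_pos_iff.mp (by omega)
  obtain ⟨x, r, rfl, hx⟩ := split_first h1
  have h2 : r.count a = 1 := by
    rw [List.count_append, List.count_cons_self, List.count_eq_zero.mpr hx] at h
    omega
  have h3 : a ∈ r := List.count_pos_iff.mp (by omega)
  obtain ⟨y, z, rfl, hy⟩ := split_first h3
  refine ⟨x, y, z, by simp, hx, hy, ?_⟩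
  intro hz
  have := List.count_append (a := a) (l₁ := y) (l₂ := a :: z)
  rw [List.count_cons_self, List.count_eq_zero.mpr hy] at this
  have hzc : z.count a ≥ 1 := List.count_pos_iff.mpr hz
  omega

lemma contains_1221 {w : List ℕ} :
    Contains w [1,2,2,1] ↔ ∃ a b, a < b ∧ [a,b,b,a].Sublist w := by
  constructor
  · rintro ⟨t, hs, hlen, hiso⟩
    simp at hlen
    match t, hlen with
    | [a,b,c,d], _ =>
      have h01 := hiso 0 1 (by norm_num) (by norm_num)
      have h12 := hiso 1 2 (by norm_num) (by norm_num)
      have h03 := hiso 0 3 (by norm_num) (by norm_num)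
      simp [List.getD] at h01 h12 h03
      obtain rfl : b = c := h12.2
      obtain rfl : a = d := h03.2
      exact ⟨a, b, h01.1, hs⟩
  · rintro ⟨a, b, hab, hs⟩
    refine ⟨[a,b,b,a], hs, by simp, ?_⟩
    intro r s hr hs'
    simp at hr hs'
    interval_cases r <;> interval_cases s <;> simp [List.getD] <;> omega

lemma contains_2112 {w : List ℕ} :
    Contains w [2,1,1,2] ↔ ∃ a b, a < b ∧ [b,a,a,b].Sublist w := by
  constructor
  · rintro ⟨t, hs, hlen, hiso⟩
    simp at hlen
    match t, hlen with
    | [a,b,c,d], _ =>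
      have h01 := hiso 0 1 (by norm_num) (by norm_num)
      have h12 := hiso 1 2 (by norm_num) (by norm_num)
      have h03 := hiso 0 3 (by norm_num) (by norm_num)
      simp [List.getD] at h01 h12 h03
      obtain rfl : b = c := h12.2
      obtain rfl : a = d := h03.2
      exact ⟨b, a, by omega, hs⟩
  · rintro ⟨a, b, hab, hs⟩
    refine ⟨[b,a,a,b], hs, by simp, ?_⟩
    intro r s hr hs'
    simp at hr hs'
    interval_cases r <;> interval_cases s <;> simp [List.getD] <;> omega

lemma contains_123 {w : List ℕ} :
    Contains w [1,2,3] ↔ ∃ a b c, a < b ∧ b < c ∧ [a,b,c].Sublist w := by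
  constructor
  · rintro ⟨t, hs, hlen, hiso⟩
    simp at hlen
    match t, hlen with
    | [a,b,c], _ =>
      have h01 := hiso 0 1 (by norm_num) (by norm_num)
      have h12 := hiso 1 2 (by norm_num) (by norm_num)
      simp [List.getD] at h01 h12
      exact ⟨a, b, c, h01.1, h12.1, hs⟩
  · rintro ⟨a, b, c, hab, hbc, hs⟩
    refine ⟨[a,b,c], hs, by simp, ?_⟩
    intro r s hr hs'
    simp at hr hs'
    interval_cases r <;> interval_cases s <;> simp [List.getD] <;> omega

lemma contains_213 {w : List ℕ} :
    Contains w [2,1,3] ↔ ∃ a b c, a < b ∧ b < c ∧ [b,a,c].Sublist w := by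
  constructor
  · rintro ⟨t, hs, hlen, hiso⟩
    simp at hlen
    match t, hlen with
    | [a,b,c], _ =>
      have h01 := hiso 0 1 (by norm_num) (by norm_num)
      have h12 := hiso 1 2 (by norm_num) (by norm_num)
      have h02 := hiso 0 2 (by norm_num) (by norm_num)
      simp [List.getD] at h01 h12 h02
      exact ⟨b, a, c, by omega, by omega, hs⟩
  · rintro ⟨a, b, c, hab, hbc, hs⟩
    refine ⟨[b,a,c], hs, by simp, ?_⟩
    intro r s hr hs'
    simp at hr hs'
    interval_cases r <;> interval_cases s <;> simp [List.getD] <;> omega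

lemma contains_231 {w : List ℕ} :
    Contains w [2,3,1] ↔ ∃ a b c, a < b ∧ b < c ∧ [b,c,a].Sublist w := by
  constructor
  · rintro ⟨t, hs, hlen, hiso⟩
    simp at hlen
    match t, hlen with
    | [a,b,c], _ =>
      have h01 := hiso 0 1 (by norm_num) (by norm_num)
      have h02 := hiso 0 2 (by norm_num) (by norm_num)
      simp [List.getD] at h01 h02
      exact ⟨c, a, b, by omega, by omega, hs⟩
  · rintro ⟨a, b, c, hab, hbc, hs⟩
    refine ⟨[b,c,a], hs, by simp, ?_⟩
    intro r s hr hs'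
    simp at hr hs'
    interval_cases r <;> interval_cases s <;> simp [List.getD] <;> omega

lemma H0 {α : Type*} {a : α} : ∀ {u : List α} {l v : List α},
    (a :: l).Sublist (u ++ a :: v) → a ∉ u → l.Sublist v := by
  intro u
  induction u with
  | nil => intro l v h _; exact List.cons_sublist_cons.mp h
  | cons c u' ih =>
    intro l v h hu
    rw [List.cons_append] at h
    cases h with
    | cons _ h => exact ih h (fun hm => hu (List.mem_cons_of_mem _ hm))
    | cons_cons _ h => exact absurd (List.mem_cons_self) hu

-- extraction A
lemma extractA {x y z : List ℕ} {b : ℕ} (hx : (1:ℕ) ∉ x) (hz : (1:ℕ) ∉ z)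
    (h : [1,b,b,1].Sublist (x ++ 1 :: (y ++ 1 :: z))) : [b,b].Sublist y := by
  have h1 : [b,b,1].Sublist (y ++ 1 :: z) := H0 h hx
  have h2 : [1,b,b].Sublist (z.reverse ++ 1 :: y.reverse) := by
    have := List.reverse_sublist.mpr h1
    simpa using this
  have h3 : [b,b].Sublist y.reverse := H0 h2 (by simpa using hz)
  have := List.reverse_sublist.mpr h3
  simpa using this

-- extraction B, one side
lemma extractB1 {x y z : List ℕ} {b : ℕ} (hy : (1:ℕ) ∉ y)
    (hz : (1:ℕ) ∉ z) (hb : b ≠ 1)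
    (h : [b,1,1,b].Sublist (x ++ 1 :: (y ++ 1 :: z))) : b ∈ x := by
  by_contra hbx
  rcases List.sublist_append_iff.mp h with ⟨s, t, hst, hsx, ht⟩
  -- s must be []
  have hs : s = [] := by
    match s, hst with
    | [], _ => rfl
    | c :: s', hst =>
      have : c = b := by
        have := congrArg (·.head?) hst; simp at this; omega
      subst this
      exact absurd (hsx.subset (List.mem_cons_self)) hbx
  subst hs
  simp only [List.nil_append] at hst
  subst hst
  cases ht with
  | cons_cons _ h' => exact hb rfl
  | cons _ h' =>
    rcases List.sublist_append_iff.mp h' with ⟨s, t, hst, hsy, ht⟩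
    match s, hst with
    | [], hst =>
      simp only [List.nil_append] at hst; subst hst
      cases ht with
      | cons_cons _ h'' => exact hb rfl
      | cons _ h'' => exact hz (h''.subset (by simp))
    | [c], hst =>
      obtain ⟨rfl, rfl⟩ : c = b ∧ t = [1,1,b] := by
        have := congrArg (fun l => (l.head?, l.tail)) hst
        simp at this
        exact ⟨this.1.symm, this.2.symm⟩
      cases ht with
      | cons_cons _ h'' => exact hz (h''.subset (by simp))
      | cons _ h'' => exact hz (h''.subset (by simp))
    | c :: c' :: s', hst =>
      have : c' = 1 := by
        have := congrArg (fun l => l.tail.head?) hst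
        simp at this; omega
      subst this
      exact hy (hsy.subset (by simp))

section
variable {n : ℕ} {x y z : List ℕ}

lemma mem_xyz_ge (hD : x ++ y ++ z = dd n) {a : ℕ} (hm : a ∈ x ∨ a ∈ y ∨ a ∈ z) : 2 ≤ a ∧ a ≤ n := by
  apply dd_mem (n := n)
  rw [← hD]
  rcases hm with h|h|h <;> simp [h]

lemma w_filter (hD : x ++ y ++ z = dd n) : (x ++ 1 :: (y ++ 1 :: z)).filter (· ≠ 1) = dd n := by
  have hx : ∀ a ∈ x, a ≠ 1 := fun a ha => by
    have := mem_xyz_ge hD (Or.inl ha); omega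
  have hy : ∀ a ∈ y, a ≠ 1 := fun a ha => by
    have := mem_xyz_ge hD (Or.inr (Or.inl ha)); omega
  have hz : ∀ a ∈ z, a ≠ 1 := fun a ha => by
    have := mem_xyz_ge hD (Or.inr (Or.inr ha)); omega
  rw [← hD]
  simp only [List.filter_append, List.filter_cons]
  simp only [ne_eq, decide_not]
  rw [List.filter_eq_self.mpr (fun a ha => by simpa using hx a ha),
      List.filter_eq_self.mpr (fun a ha => by simpa using hy a ha),
      List.filter_eq_self.mpr (fun a ha => by simpa using hz a ha)]
  simp

-- key order lemma
lemma pair_one (hD : x ++ y ++ z = dd n) {u v : ℕ} (hs : [u,v].Sublist (x ++ 1 :: (y ++ 1 :: z)))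
    (huv : u < v) : u = 1 := by
  by_contra hu
  have hv : v ≠ 1 := by
    have hm : u ∈ x ++ 1 :: (y ++ 1 :: z) := hs.subset (by simp)
    have : 2 ≤ u := by
      rcases (by simpa using hm) with h | h | h | h | h
      · exact (mem_xyz_ge hD (Or.inl h)).1
      · omega
      · exact (mem_xyz_ge hD (Or.inr (Or.inl h))).1
      · omega
      · exact (mem_xyz_ge hD (Or.inr (Or.inr h))).1
    omega
  have hf : [u,v].Sublist (dd n) := by
    rw [← w_filter hD]
    have := List.Sublist.filter (· ≠ 1 : ℕ → Prop) hs
    rwa [show List.filter (· ≠ 1) [u,v] = [u,v] from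
      List.filter_eq_self.mpr (by intro a ha; rcases (by simpa using ha) with rfl|rfl <;> simp [hu, hv])] at this
  have := List.pairwise_iff_forall_sublist.mp (dd_sorted n) hf
  omega

end

lemma extractB2 {x y z : List ℕ} {b : ℕ} (hx : (1:ℕ) ∉ x) (hy : (1:ℕ) ∉ y)
    (hb : b ≠ 1)
    (h : [b,1,1,b].Sublist (x ++ 1 :: (y ++ 1 :: z))) : b ∈ z := by
  have hrev : [b,1,1,b].Sublist (z.reverse ++ 1 :: (y.reverse ++ 1 :: x.reverse)) := by
    have := List.reverse_sublist.mpr h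
    simpa using this
  have := extractB1 (by simpa using hy) (by simpa using hx) hb hrev
  simpa using this


section
variable {n : ℕ} {x y z : List ℕ}

lemma mem_w_one_le (hD : x ++ y ++ z = dd n) {a : ℕ}
    (hm : a ∈ x ++ 1 :: (y ++ 1 :: z)) : 1 ≤ a := by
  rcases (by simpa using hm) with h | h | h | h | h
  · exact le_trans (by norm_num) (mem_xyz_ge hD (Or.inl h)).1
  · omega
  · exact le_trans (by norm_num) (mem_xyz_ge hD (Or.inr (Or.inl h))).1
  · omega
  · exact le_trans (by norm_num) (mem_xyz_ge hD (Or.inr (Or.inr h))).1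

lemma good_msp (hD : x ++ y ++ z = dd n) (hn : 2 ≤ n) :
    IsMultisetPerm n (x ++ 1 :: (y ++ 1 :: z)) := by
  intro i
  have hc := congrArg (List.count i) hD
  rw [List.count_append, List.count_append, dd_count] at hc
  rw [List.count_append, List.count_cons, List.count_append, List.count_cons]
  by_cases h1 : (1:ℕ) = i <;>
    simp [h1] at hc ⊢ <;> split_ifs at hc ⊢ <;> omega

lemma good_avoids (hD : x ++ y ++ z = dd n)
    (hcond : (y = [] ∧ Even x.length) ∨ y.length = 1 ∨
      (y.length = 2 ∧ Odd x.length)) :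
    (¬∃ a b, a < b ∧ [a,b,b,a].Sublist (x ++ 1 :: (y ++ 1 :: z))) ∧
    (¬∃ a b, a < b ∧ [b,a,a,b].Sublist (x ++ 1 :: (y ++ 1 :: z))) ∧
    (¬∃ a b c, a < b ∧ b < c ∧ [a,b,c].Sublist (x ++ 1 :: (y ++ 1 :: z))) ∧
    (¬∃ a b c, a < b ∧ b < c ∧ [b,a,c].Sublist (x ++ 1 :: (y ++ 1 :: z))) ∧
    (¬∃ a b c, a < b ∧ b < c ∧ [b,c,a].Sublist (x ++ 1 :: (y ++ 1 :: z))) := by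
  have hx1 : (1:ℕ) ∉ x := fun h => by have := mem_xyz_ge hD (Or.inl h); omega
  have hy1 : (1:ℕ) ∉ y := fun h => by
    have := mem_xyz_ge hD (Or.inr (Or.inl h)); omega
  have hz1 : (1:ℕ) ∉ z := fun h => by
    have := mem_xyz_ge hD (Or.inr (Or.inr h)); omega
  refine ⟨?_, ?_, ?_, ?_, ?_⟩
  · -- 1221
    rintro ⟨a, b, hab, hs⟩
    have ha : a = 1 := pair_one hD (((by simp : [a,b].Sublist [a,b,b,a])).trans hs) hab
    subst ha
    have hbb := extractA hx1 hz1 hs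
    rcases hcond with ⟨rfl, _⟩ | hy | ⟨hy2, hodd⟩
    · simp at hbb
    · have := hbb.length_le; simp [hy] at this
    · have hyeq := hbb.eq_of_length (by simp [hy2])
      subst hyeq
      have : dd n = x ++ b :: [] ++ b :: z := by rw [← hD]; simp
      have := (dd_dup_adj this).2
      simp [Nat.even_iff, Nat.odd_iff] at this hodd
      omega
  · -- 2112
    rintro ⟨a, b, hab, hs⟩
    have ha : a = 1 := pair_one hD (((by
      refine List.Sublist.cons _ ?_
      refine List.cons_sublist_cons.mpr ?_
      exact (by simp : [b].Sublist [a, b]) : [a,b].Sublist [b,a,a,b])).trans hs) hab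
    subst ha
    have hb : b ≠ 1 := by omega
    have hbx := extractB1 hy1 hz1 hb hs
    have hbz := extractB2 hx1 hy1 hb hs
    -- count argument
    have hc := congrArg (List.count b) hD
    rw [List.count_append, List.count_append, dd_count] at hc
    have hbn := mem_xyz_ge hD (Or.inl hbx)
    rw [if_pos ⟨hbn.1, hbn.2⟩] at hc
    have hcx : 0 < x.count b := List.count_pos_iff.mpr hbx
    have hcz : 0 < z.count b := List.count_pos_iff.mpr hbz
    have hcy : y.count b = 0 := by omega
    obtain ⟨x₁, x₂, rfl, _⟩ := split_first hbx
    obtain ⟨z₁, z₂, rfl, _⟩ := split_first hbz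
    have : dd n = x₁ ++ b :: (x₂ ++ y ++ z₁) ++ b :: z₂ := by
      rw [← hD]; simp
    obtain ⟨hnil, heven⟩ := dd_dup_adj this
    have hlen := congrArg List.length hnil
    simp only [List.length_append, List.length_nil] at hlen
    have hxlen : Odd (x₁ ++ b :: x₂).length := by
      simp [Nat.odd_iff, Nat.even_iff] at heven ⊢
      omega
    have hynil : y = [] := List.length_eq_zero_iff.mp (by omega)
    rcases hcond with ⟨_, he⟩ | hy | ⟨hy2, _⟩
    · rw [Nat.even_iff] at he; rw [Nat.odd_iff] at hxlen; omega
    · rw [hynil] at hy; simp at hy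
    · rw [hynil] at hy2; simp at hy2
  · -- 123
    rintro ⟨a, b, c, hab, hbc, hs⟩
    have hb : b = 1 := pair_one hD (((by simp : [b,c].Sublist [a,b,c])).trans hs) hbc
    have ha1 : 1 ≤ a := mem_w_one_le hD (hs.subset (by simp))
    omega
  · -- 213
    rintro ⟨a, b, c, hab, hbc, hs⟩
    have hb : b = 1 := pair_one hD (((by
      refine List.cons_sublist_cons.mpr ?_
      exact (by simp : [c].Sublist [a, c]) : [b,c].Sublist [b,a,c])).trans hs) hbc
    have ha1 : 1 ≤ a := mem_w_one_le hD (hs.subset (by simp))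
    omega
  · -- 231
    rintro ⟨a, b, c, hab, hbc, hs⟩
    have hb : b = 1 := pair_one hD (((by simp : [b,c].Sublist [b,c,a])).trans hs) hbc
    have ha1 : 1 ≤ a := mem_w_one_le hD (hs.subset (by simp))
    omega

end

section
variable {n : ℕ} {w : List ℕ}

lemma decomp_of_good (hn : 2 ≤ n) (hmsp : IsMultisetPerm n w)
    (h1221 : ¬∃ a b, a < b ∧ [a,b,b,a].Sublist w)
    (h2112 : ¬∃ a b, a < b ∧ [b,a,a,b].Sublist w)
    (h123 : ¬∃ a b c, a < b ∧ b < c ∧ [a,b,c].Sublist w)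
    (h213 : ¬∃ a b c, a < b ∧ b < c ∧ [b,a,c].Sublist w)
    (h231 : ¬∃ a b c, a < b ∧ b < c ∧ [b,c,a].Sublist w) :
    ∃ x y z : List ℕ, w = x ++ 1 :: (y ++ 1 :: z) ∧ x ++ y ++ z = dd n ∧
      ((y = [] ∧ Even x.length) ∨ y.length = 1 ∨
        (y.length = 2 ∧ Odd x.length)) := by
  have hc1 : w.count 1 = 2 := by rw [hmsp 1, if_pos ⟨le_refl 1, by omega⟩]
  obtain ⟨x, y, z, rfl, hx1, hy1, hz1⟩ := count_two_split hc1
  set w := x ++ 1 :: y ++ 1 :: z with hw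
  have hmem : ∀ a, a ∈ x ++ y ++ z → 2 ≤ a ∧ a ≤ n := by
    intro a ha
    have haw : a ∈ w := by
      rw [hw]; simp at ha ⊢; tauto
    have hcnt : 0 < w.count a := List.count_pos_iff.mpr haw
    rw [hmsp a] at hcnt
    have h1n : 1 ≤ a ∧ a ≤ n := by by_contra h; rw [if_neg h] at hcnt; omega
    have hne : a ≠ 1 := by
      rintro rfl
      simp at ha
      rcases ha with h | h | h
      exacts [hx1 h, hy1 h, hz1 h]
    exact ⟨by omega, h1n.2⟩
  -- permutation
  have hperm : (x ++ y ++ z).Perm (dd n) := by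
    rw [List.perm_iff_count]
    intro a
    rw [dd_count]
    by_cases ha : a = 1
    · subst ha
      rw [if_neg (by omega)]
      simp [List.count_eq_zero.mpr hx1, List.count_eq_zero.mpr hy1,
        List.count_eq_zero.mpr hz1]
    · have : w.count a = x.count a + (y.count a + z.count a) := by
        rw [hw]; simp [List.count_append, List.count_cons, Ne.symm ha]
      have h2 := hmsp a
      rw [this] at h2
      rw [List.count_append, List.count_append]
      split_ifs with h
      · rw [if_pos (by omega)] at h2; omega
      · rw [if_neg (by omega)] at h2; omega
  -- sortedness
  have hsort : (x ++ y ++ z).Pairwise (· ≥ ·) := by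
    rw [List.pairwise_iff_forall_sublist]
    intro a b hs
    by_contra hab'
    have hab : a < b := by omega
    have ha2 : 2 ≤ a := (hmem a (hs.subset (by simp))).1
    rw [List.append_assoc] at hs
    rcases List.sublist_append_iff.mp hs with ⟨l₁, l₂, heq, hl₁, hl₂⟩
    match l₁, l₂, heq with
    | [], l₂, heq =>
      rw [List.nil_append] at heq; subst heq
      refine h123 ⟨1, a, b, by omega, hab, ?_⟩
      have step1 : [a,b].Sublist (y ++ 1 :: z) :=
        hl₂.trans (List.Sublist.append (List.Sublist.refl y)
          (List.sublist_cons_self 1 z))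
      have step2 : [1,a,b].Sublist (1 :: (y ++ 1 :: z)) :=
        List.cons_sublist_cons.mpr step1
      exact step2.trans (by rw [hw]; simpa using List.sublist_append_right x _)
    | [c], l₂, heq =>
      simp only [List.cons_append, List.nil_append, List.cons.injEq] at heq
      obtain ⟨rfl, rfl⟩ := heq
      refine h213 ⟨1, a, b, by omega, hab, ?_⟩
      have hbz : [b].Sublist (y ++ 1 :: z) :=
        hl₂.trans (List.Sublist.append (List.Sublist.refl y)
          (List.sublist_cons_self 1 z))
      have : [a] ++ [1,b] = [a,1,b] := rfl
      rw [hw]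
      have : ([a] ++ (1 :: [b])).Sublist (x ++ (1 :: (y ++ 1 :: z))) :=
        List.Sublist.append hl₁ (List.cons_sublist_cons.mpr hbz)
      simpa using this
    | c :: c' :: l₁', l₂, heq =>
      simp only [List.cons_append, List.cons.injEq] at heq
      obtain ⟨rfl, rfl, h3⟩ := heq
      obtain ⟨rfl, rfl⟩ : l₁' = [] ∧ l₂ = [] := by
        constructor <;> [skip; skip] <;>
          (apply List.length_eq_zero_iff.mp;
           have := congrArg List.length h3; simp at this; omega)
      refine h231 ⟨1, a, b, by omega, hab, ?_⟩
      rw [hw]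
      have : ([a,b] ++ (1 :: [])).Sublist (x ++ (1 :: (y ++ 1 :: z))) :=
        List.Sublist.append hl₁ (List.cons_sublist_cons.mpr (List.nil_sublist _))
      simpa using this
  have hD : x ++ y ++ z = dd n :=
    List.Perm.eq_of_pairwise' hsort (dd_sorted n) hperm
  refine ⟨x, y, z, by simp [hw], hD, ?_⟩
  have hD2 : ∀ b, ¬ [b,b].Sublist y := by
    intro b hbb
    have hb2 : 2 ≤ b := (hmem b (by simp [hbb.subset (by simp : b ∈ [b,b])])).1
    refine h1221 ⟨1, b, by omega, ?_⟩
    have step1 : ([b,b] ++ [1]).Sublist (y ++ 1 :: z) :=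
      List.Sublist.append hbb (by simp)
    have step2 : [1,b,b,1].Sublist (1 :: (y ++ 1 :: z)) :=
      List.cons_sublist_cons.mpr (by simpa using step1)
    rw [hw]
    exact step2.trans (by simpa using List.sublist_append_right x (1 :: (y ++ 1 :: z)))
  have hB : ∀ b, 2 ≤ b → ¬(b ∈ x ∧ b ∈ z) := by
    rintro b hb2 ⟨hbx, hbz⟩
    refine h2112 ⟨1, b, by omega, ?_⟩
    have s1 : [1,b].Sublist (1 :: z) := List.cons_sublist_cons.mpr
      (List.singleton_sublist.mpr hbz)
    have s2 : [1,b].Sublist (y ++ 1 :: z) := s1.trans (List.sublist_append_right y _)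
    have s3 : [1,1,b].Sublist (1 :: (y ++ 1 :: z)) := List.cons_sublist_cons.mpr s2
    have s4 : ([b] ++ [1,1,b]).Sublist (x ++ (1 :: (y ++ 1 :: z))) :=
      List.Sublist.append (List.singleton_sublist.mpr hbx) s3
    rw [hw]
    simpa using s4
  have hlen : x.length + (y.length + z.length) = 2*n - 2 := by
    have := congrArg List.length hD
    simpa [dd_length] using this
  match y, hD2, hlen with
  | [], _, hlen =>
    refine Or.inl ⟨rfl, ?_⟩
    by_contra hodd
    rw [Nat.not_even_iff_odd] at hodd
    rcases List.eq_nil_or_concat x with rfl | ⟨x', c, rfl⟩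
    · simp [Nat.odd_iff] at hodd
    · match z, hlen with
      | [], hlen =>
        simp [Nat.odd_iff, Nat.even_iff] at hodd hlen ⊢
        omega
      | e :: z', _ =>
        have hDD : dd n = x' ++ c :: e :: z' := by rw [← hD]; simp
        have hce : c = e := dd_even_adj hDD (by
          simp [Nat.odd_iff, Nat.even_iff] at hodd ⊢; omega)
        subst hce
        have hc2 : 2 ≤ c := (hmem c (by simp)).1
        exact hB c hc2 ⟨by simp, by simp⟩
  | [y₀], _, _ => exact Or.inr (Or.inl rfl)
  | y₀ :: y₁ :: y', hD2, hlen =>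
    have hodd : Odd x.length := by
      by_contra hev
      rw [Nat.not_odd_iff_even] at hev
      have hDD : dd n = x ++ y₀ :: y₁ :: (y' ++ z) := by rw [← hD]; simp
      have := dd_even_adj hDD hev
      subst this
      exact hD2 y₀ (List.cons_sublist_cons.mpr
        (List.cons_sublist_cons.mpr (List.nil_sublist _)))
    match y', hD2 with
    | [], _ => exact Or.inr (Or.inr ⟨rfl, hodd⟩)
    | y₂ :: y'', hD2 =>
      exfalso
      have hDD : dd n = (x ++ [y₀]) ++ y₁ :: y₂ :: (y'' ++ z) := by
        rw [← hD]; simp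
      have := dd_even_adj hDD (by
        simp [Nat.odd_iff, Nat.even_iff] at hodd ⊢; omega)
      subst this
      refine hD2 y₁ ?_
      exact List.Sublist.cons _ (List.cons_sublist_cons.mpr
        (List.cons_sublist_cons.mpr (List.nil_sublist _)))

end

def validF (n : ℕ) : Finset (ℕ × ℕ) :=
  (Finset.range n).image (fun i => (2*i, 2*i)) ∪
  (Finset.range (2*n-2)).image (fun p => (p, p+1)) ∪
  (Finset.range (n-2)).image (fun i => (2*i+1, 2*i+3))

def fW (n : ℕ) (pq : ℕ × ℕ) : List ℕ :=
  (dd n).take pq.1 ++ 1 :: (((dd n).drop pq.1).take (pq.2 - pq.1) ++ 1 :: (dd n).drop pq.2)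

lemma validF_card (n : ℕ) (hn : 2 ≤ n) : (validF n).card = 4 * (n - 1) := by
  rw [validF]
  rw [Finset.card_union_of_disjoint, Finset.card_union_of_disjoint]
  · rw [Finset.card_image_of_injective _ (by intro a b h; simpa using h),
      Finset.card_image_of_injective _ (by intro a b h; simpa using h),
      Finset.card_image_of_injective _ (by intro a b h; simp at h; omega),
      Finset.card_range, Finset.card_range, Finset.card_range]
    omega
  · rw [Finset.disjoint_left]
    rintro ⟨p, q⟩ h1 h2
    simp at h1 h2
    omega
  · rw [Finset.disjoint_left]
    rintro ⟨p, q⟩ h1 h2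
    simp at h1 h2
    rcases h1 with h1 | h1 <;> obtain ⟨i, _, hi1, hi2⟩ := h2 <;>
      [obtain ⟨j, _, hj1, hj2⟩ := h1; obtain ⟨j, _, hj1, hj2⟩ := h1] <;> omega

lemma mem_validF (n : ℕ) {p q : ℕ} (hn : 2 ≤ n) :
    (p, q) ∈ validF n ↔ q ≤ 2*n - 2 ∧
      ((q = p ∧ Even p) ∨ q = p + 1 ∨ (q = p + 2 ∧ Odd p)) := by
  simp [validF, Nat.even_iff, Nat.odd_iff]
  constructor
  · rintro ((⟨i, hi, h1, h2⟩ | ⟨i, hi, h1, h2⟩) | ⟨i, hi, h1, h2⟩) <;> omega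
  · rintro ⟨hq, (⟨h, hp⟩ | h | ⟨h, hp⟩)⟩
    · exact Or.inl ⟨p/2, by omega, by omega, by omega⟩
    · exact Or.inr (Or.inl (by omega))
    · exact Or.inr (Or.inr ⟨p/2, by omega, by omega, by omega⟩)

lemma fW_decomp (n : ℕ) {p q : ℕ} (hpq : p ≤ q) (hq : q ≤ 2*n-2) :
    ((dd n).take p) ++ (((dd n).drop p).take (q - p)) ++ ((dd n).drop q) = dd n ∧
    ((dd n).take p).length = p ∧ (((dd n).drop p).take (q - p)).length = q - p := by
  have hlen := dd_length n
  refine ⟨?_, by simp; omega, by simp; omega⟩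
  rw [List.append_assoc]
  have h1 : (dd n).drop q = (((dd n).drop p).drop (q - p)) := by
    rw [List.drop_drop]
    congr 1
    omega
  rw [h1, List.take_append_drop, List.take_append_drop]

lemma fW_injOn (n : ℕ) {p q p' q' : ℕ} (hpq : p ≤ q) (hq : q ≤ 2*n-2)
    (hpq' : p' ≤ q') (hq' : q' ≤ 2*n-2) (h : fW n (p,q) = fW n (p',q')) :
    p = p' ∧ q = q' := by
  have hlen := dd_length n
  have key : ∀ (l : List ℕ), l.Sublist (dd n) → ∀ a ∈ l, a ≠ 1 := by
    intro l hl a ha h1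
    subst h1
    have := dd_mem (hl.subset ha)
    omega
  rw [fW, fW] at h
  obtain ⟨h1, h2⟩ := uniq_split (key _ (List.take_sublist _ _))
    (key _ (List.take_sublist _ _)) h
  have hp : p = p' := by
    have := congrArg List.length h1
    simp at this
    omega
  subst hp
  obtain ⟨h3, _⟩ := uniq_split (key _ ((List.take_sublist _ _).trans (List.drop_sublist _ _)))
    (key _ ((List.take_sublist _ _).trans (List.drop_sublist _ _))) h2
  have := congrArg List.length h3
  simp at this
  omega

theorem nonnesting_avoid_123_213_231 (n : ℕ) (hn : 2 ≤ n) :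
    {w : List ℕ | IsNonnesting n w ∧
      Avoids w [1,2,3] ∧ Avoids w [2,1,3] ∧ Avoids w [2,3,1]}.ncard =
      4 * (n - 1) := by
  have hset : {w : List ℕ | IsNonnesting n w ∧
      Avoids w [1,2,3] ∧ Avoids w [2,1,3] ∧ Avoids w [2,3,1]} =
      ↑((validF n).image (fW n)) := by
    ext w
    simp only [Set.mem_setOf_eq, Finset.coe_image, Set.mem_image, Finset.mem_coe]
    constructor
    · rintro ⟨⟨hmsp, hA, hB⟩, hC, hD', hE⟩
      obtain ⟨x, y, z, hw, hD, hcond⟩ := decomp_of_good hn hmsp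
        (fun h => hA (contains_1221.mpr h)) (fun h => hB (contains_2112.mpr h))
        (fun h => hC (contains_123.mpr h)) (fun h => hD' (contains_213.mpr h))
        (fun h => hE (contains_231.mpr h))
      refine ⟨(x.length, x.length + y.length), ?_, ?_⟩
      · rw [mem_validF n hn]
        have hlen := congrArg List.length hD
        simp only [List.length_append, dd_length] at hlen
        constructor
        · omega
        · rcases hcond with ⟨rfl, he⟩ | h1 | ⟨h2, ho⟩
          · exact Or.inl ⟨by simp, he⟩
          · exact Or.inr (Or.inl (by omega))
          · exact Or.inr (Or.inr ⟨by omega, ho⟩)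
      · rw [fW]
        have e1 : (dd n).take x.length = x := by
          rw [← hD, List.append_assoc, List.take_left]
        have e2 : (dd n).drop x.length = y ++ z := by
          rw [← hD, List.append_assoc, List.drop_left]
        have e3 : (dd n).drop (x.length + y.length) = z := by
          rw [← hD, show x.length + y.length = (x ++ y).length by simp,
            List.drop_left]
        simp only [e1, e2, e3]
        rw [show x.length + y.length - x.length = y.length by omega,
          List.take_left, hw]
    · rintro ⟨⟨p, q⟩, hmem, rfl⟩
      rw [mem_validF n hn] at hmem
      obtain ⟨hq2, hcase⟩ := hmem
      have hpq : p ≤ q := by rcases hcase with ⟨h,_⟩|h|⟨h,_⟩ <;> omega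
      obtain ⟨hD, hlx, hly⟩ := fW_decomp n hpq hq2
      have hcond : ((dd n).drop p).take (q - p) = [] ∧
            Even ((dd n).take p).length ∨
          (((dd n).drop p).take (q - p)).length = 1 ∨
          ((((dd n).drop p).take (q - p)).length = 2 ∧
            Odd ((dd n).take p).length) := by
        rcases hcase with ⟨hqp, he⟩ | h1 | ⟨h2, ho⟩
        · exact Or.inl ⟨List.length_eq_zero_iff.mp (by omega), by rw [hlx]; exact he⟩
        · exact Or.inr (Or.inl (by omega))
        · exact Or.inr (Or.inr ⟨by omega, by rw [hlx]; exact ho⟩)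
      have hmsp := good_msp hD hn
      have havoid := good_avoids hD hcond
      refine ⟨⟨hmsp, ?_, ?_⟩, ?_, ?_, ?_⟩
      · exact fun h => havoid.1 (contains_1221.mp h)
      · exact fun h => havoid.2.1 (contains_2112.mp h)
      · exact fun h => havoid.2.2.1 (contains_123.mp h)
      · exact fun h => havoid.2.2.2.1 (contains_213.mp h)
      · exact fun h => havoid.2.2.2.2 (contains_231.mp h)
  rw [hset, Set.ncard_coe_finset, Finset.card_image_of_injOn, validF_card n hn]
  rintro ⟨p, q⟩ h ⟨p', q'⟩ h' heq
  simp only [Finset.mem_coe] at h h'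
  rw [mem_validF n hn] at h h'
  have hpq : p ≤ q := by rcases h.2 with ⟨h1,_⟩|h1|⟨h1,_⟩ <;> omega
  have hpq' : p' ≤ q' := by rcases h'.2 with ⟨h1,_⟩|h1|⟨h1,_⟩ <;> omega
  have := fW_injOn n hpq h.1 hpq' h'.1 heq
  simp [Prod.ext_iff, this.1, this.2]
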